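/- arXiv:1912.00621 — 2 statements merged into one kernel-verified Lean document; each statement's English description precedes it below -/
import Mathlib

section
/- Let C be a Krull-Schmidt, K-linear extriangulated category (K a field) with dim_K Hom_C(X,Y) < ∞ and dim_K E(X,Y) < ∞ for all X,Y ∈ C, and let X ∈ Ind(C). Then S(X) is a directed ordered set under the relation >: (i) if s > t and t > s then s ∼ t; (ii) if s > t and t > u then s > u; (iii) for any s, t ∈ S(X) there exists u ∈ S(X) with s > u and t > u. The dual statements hold for S'(X) with its relation >. -/
open CategoryTheory CategoryTheory.Limits Opposite ZeroObject

attribute [local instance] CategoryTheory.Limits.hasBinaryBiproducts_of_finite_biproducts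

universe w v u

noncomputable section

/-- An object of a preadditive category with finite biproducts is *indecomposable* if it is
nonzero and admits no nontrivial direct sum decomposition. -/
def Indec {C : Type u} [Category.{v} C] [Preadditive C] [HasFiniteBiproducts C] (X : C) : Prop :=
  ¬ IsZero X ∧ ∀ (Y Z : C), Nonempty (X ≅ Y ⊞ Z) → IsZero Y ∨ IsZero Z

/-- A preadditive category is *Krull-Schmidt* if every object is (isomorphic to) a finite
biproduct of objects having local endomorphism rings. -/
def IsKrullSchmidt (C : Type u) [Category.{v} C] [Preadditive C] [HasFiniteBiproducts C] : Prop :=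
  ∀ X : C, ∃ (n : ℕ) (f : Fin n → C),
    (∀ i, IsLocalRing (CategoryTheory.End (f i))) ∧ Nonempty (X ≅ ⨁ f)

/-- `C` is *locally finite*: for every indecomposable `A` there are, up to isomorphism, only
finitely many indecomposables `B` with `Hom(A, B) ≠ 0`, and only finitely many indecomposables
`B` with `Hom(B, A) ≠ 0`. -/
def LocFinite (C : Type u) [Category.{v} C] [Preadditive C] [HasFiniteBiproducts C] : Prop :=
  ∀ A : C, Indec A →
    (∃ (n : ℕ) (ind : Fin n → C), ∀ B : C, Indec B → (∃ φ : A ⟶ B, φ ≠ 0) →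
        ∃ i, Nonempty (B ≅ ind i)) ∧
    (∃ (n : ℕ) (ind : Fin n → C), ∀ B : C, Indec B → (∃ φ : B ⟶ A, φ ≠ 0) →
        ∃ i, Nonempty (B ≅ ind i))

section ExtCatDef

variable (K : Type w) [Field K]
variable (C : Type u) [Category.{v} C] [Preadditive C] [Linear K C] [HasFiniteBiproducts C]

/-- An extriangulated structure (in the sense of Nakaoka–Palu) on the `K`-linear category `C`,
with `K`-linear extension groups: a biadditive functor `E : Cᵒᵖ × C → Ab` (here landing in
`K`-modules, recording the `K`-linear structure on the extension groups) together with an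
additive realization `real` of extensions by conflations, satisfying (ET1)–(ET4) and their
duals. -/
structure ExtCat where
  /-- the biadditive functor `E : Cᵒᵖ × C → Ab`. -/
  E : Cᵒᵖ ⥤ C ⥤ ModuleCat.{v} K
  additive₁ : E.Additive
  additive₂ : ∀ c : Cᵒᵖ, (E.obj c).Additive
  /-- `real x y δ` says that the sequence `x, y` realizes the extension `δ`, i.e.
  `(x, y, δ)` is an `E`-triangle. -/
  real : ∀ {a b c : C}, (a ⟶ b) → (b ⟶ c) → ((E.obj (op c)).obj a) → Prop
  /-- every extension is realized by some conflation. -/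
  real_exists : ∀ {a c : C} (δ : (E.obj (op c)).obj a),
    ∃ (b : C) (x : a ⟶ b) (y : b ⟶ c), real x y δ
  /-- the realization is well defined on equivalence classes of sequences. -/
  real_congr : ∀ {a b b' c : C} {x : a ⟶ b} {y : b ⟶ c} {x' : a ⟶ b'} {y' : b' ⟶ c}
    {δ : (E.obj (op c)).obj a} (e : b ≅ b'),
      x ≫ e.hom = x' → e.hom ≫ y' = y → real x y δ → real x' y' δ
  /-- any two realizations of the same extension are equivalent sequences. -/
  real_unique : ∀ {a b b' c : C} {x : a ⟶ b} {y : b ⟶ c} {x' : a ⟶ b'} {y' : b' ⟶ c}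
    {δ : (E.obj (op c)).obj a}, real x y δ → real x' y' δ →
      ∃ e : b ≅ b', x ≫ e.hom = x' ∧ e.hom ≫ y' = y
  /-- (ET2) realization of morphisms of extensions: if `f_* δ = g^* δ'` then `(f, g)` extends to
  a morphism of the realizing `E`-triangles. -/
  real_lift : ∀ {a b c a' b' c' : C} {x : a ⟶ b} {y : b ⟶ c} {x' : a' ⟶ b'} {y' : b' ⟶ c'}
    {δ : (E.obj (op c)).obj a} {δ' : (E.obj (op c')).obj a'} (f : a ⟶ a') (g : c ⟶ c'),
      real x y δ → real x' y' δ' →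
      ((E.obj (op c)).map f) δ = ((E.map g.op).app a') δ' →
      ∃ m : b ⟶ b', x ≫ m = f ≫ x' ∧ m ≫ y' = y ≫ g
  /-- the realization is additive, part (i): split extensions are realized by split sequences. -/
  real_zero : ∀ a c : C,
    real (biprod.inl : a ⟶ a ⊞ c) (biprod.snd : a ⊞ c ⟶ c) (0 : (E.obj (op c)).obj a)
  /-- the realization is additive, part (ii): it commutes with direct sums. -/
  real_sum : ∀ {a b c a' b' c' : C} {x : a ⟶ b} {y : b ⟶ c} {x' : a' ⟶ b'} {y' : b' ⟶ c'}
    {δ : (E.obj (op c)).obj a} {δ' : (E.obj (op c')).obj a'},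
      real x y δ → real x' y' δ' →
      real (biprod.map x x') (biprod.map y y')
        (((E.map (biprod.fst : c ⊞ c' ⟶ c).op).app (a ⊞ a'))
            (((E.obj (op c)).map (biprod.inl : a ⟶ a ⊞ a')) δ) +
         ((E.map (biprod.snd : c ⊞ c' ⟶ c').op).app (a ⊞ a'))
            (((E.obj (op c')).map (biprod.inr : a' ⟶ a ⊞ a')) δ'))
  /-- (ET3). -/
  et3 : ∀ {a b c a' b' c' : C} {x : a ⟶ b} {y : b ⟶ c} {x' : a' ⟶ b'} {y' : b' ⟶ c'}
    {δ : (E.obj (op c)).obj a} {δ' : (E.obj (op c')).obj a'} (f : a ⟶ a') (m : b ⟶ b'),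
      real x y δ → real x' y' δ' → x ≫ m = f ≫ x' →
      ∃ g : c ⟶ c', y ≫ g = m ≫ y' ∧ ((E.obj (op c)).map f) δ = ((E.map g.op).app a') δ'
  /-- (ET3)ᵒᵖ. -/
  et3op : ∀ {a b c a' b' c' : C} {x : a ⟶ b} {y : b ⟶ c} {x' : a' ⟶ b'} {y' : b' ⟶ c'}
    {δ : (E.obj (op c)).obj a} {δ' : (E.obj (op c')).obj a'} (g : c ⟶ c') (m : b ⟶ b'),
      real x y δ → real x' y' δ' → m ≫ y' = y ≫ g →
      ∃ f : a ⟶ a', x ≫ m = f ≫ x' ∧ ((E.obj (op c)).map f) δ = ((E.map g.op).app a') δ'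
  /-- (ET4). -/
  et4 : ∀ {A B D F G : C} {f : A ⟶ B} {f' : B ⟶ D} {g : B ⟶ G} {g' : G ⟶ F}
    {δ : (E.obj (op D)).obj A} {δ' : (E.obj (op F)).obj B},
      real f f' δ → real g g' δ' →
      ∃ (Eo : C) (d : D ⟶ Eo) (e : Eo ⟶ F) (h' : G ⟶ Eo) (δ'' : (E.obj (op Eo)).obj A),
        real (f ≫ g) h' δ'' ∧ f' ≫ d = g ≫ h' ∧ h' ≫ e = g' ∧
        real d e (((E.obj (op F)).map f') δ') ∧
        ((E.map d.op).app A) δ'' = δ ∧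
        ((E.obj (op Eo)).map f) δ'' = ((E.map e.op).app B) δ'
  /-- (ET4)ᵒᵖ. -/
  et4op : ∀ {A B D F Cc : C} {f' : D ⟶ A} {f : A ⟶ B} {g' : F ⟶ B} {g : B ⟶ Cc}
    {δ : (E.obj (op B)).obj D} {δ' : (E.obj (op Cc)).obj F},
      real f' f δ → real g' g δ' →
      ∃ (Eo : C) (d : D ⟶ Eo) (e : Eo ⟶ F) (h' : Eo ⟶ A) (δ'' : (E.obj (op Cc)).obj Eo),
        real h' (f ≫ g) δ'' ∧ d ≫ h' = f' ∧ h' ≫ f = e ≫ g' ∧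
        real d e (((E.map g'.op).app D) δ) ∧
        ((E.obj (op Cc)).map e) δ'' = δ' ∧
        ((E.obj (op B)).map d) δ = ((E.map g.op).app Eo) δ''

end ExtCatDef

namespace ExtCat

variable {K : Type w} [Field K]
variable {C : Type u} [Category.{v} C] [Preadditive C] [Linear K C] [HasFiniteBiproducts C]
variable (ξ : ExtCat K C)

/-- The extension group `E(c, a)`. -/
abbrev Ext (c a : C) : Type v := (ξ.E.obj (op c)).obj a

/-- Pushforward `f_* : E(c, a) → E(c, a')` along `f : a ⟶ a'`. -/
def push (c : C) {a a' : C} (f : a ⟶ a') (δ : ξ.Ext c a) : ξ.Ext c a' :=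
  ((ξ.E.obj (op c)).map f) δ

/-- Pullback `g^* : E(c, a) → E(c', a)` along `g : c' ⟶ c`. -/
def pull (a : C) {c c' : C} (g : c' ⟶ c) (δ : ξ.Ext c a) : ξ.Ext c' a :=
  ((ξ.E.map g.op).app a) δ

/-- An object `P` is projective if `E(P, A) = 0` for all `A`. -/
def ProjObj (P : C) : Prop := ∀ (A : C) (δ : ξ.Ext P A), δ = 0

/-- An object `I` is injective if `E(A, I) = 0` for all `A`. -/
def InjObj (I : C) : Prop := ∀ (A : C) (δ : ξ.Ext A I), δ = 0

end ExtCat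

section STermDefs

variable {K : Type w} [Field K]
variable {C : Type u} [Category.{v} C] [Preadditive C] [HasFiniteBiproducts C]

/-- An element of the set `S(X)`: a non-split `E`-triangle `A ⟶ B ⟶ X` ending at `X`
whose first term `A` is indecomposable. -/
structure STerm (ξ : ExtCat K C) (X : C) where
  A : C
  B : C
  f : A ⟶ B
  g : B ⟶ X
  δ : ξ.Ext X A
  isReal : ξ.real f g δ
  nonsplit : δ ≠ 0
  indec : Indec A

/-- `s > t` in `S(X)`: there is `f : A_s ⟶ A_t` with `f_* δ_s = δ_t`, i.e. a morphism of
`E`-triangles from `s` to `t` restricting to the identity on `X`. -/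
def STerm.Gt {ξ : ExtCat K C} {X : C} (s t : STerm ξ X) : Prop :=
  ∃ f : s.A ⟶ t.A, ξ.push X f s.δ = t.δ

/-- `s ∼ t` in `S(X)`: such an `f` can be chosen to be an isomorphism. -/
def STerm.Sim {ξ : ExtCat K C} {X : C} (s t : STerm ξ X) : Prop :=
  ∃ f : s.A ⟶ t.A, IsIso f ∧ ξ.push X f s.δ = t.δ

/-- An element of the set `S'(X)`: a non-split `E`-triangle `X ⟶ B ⟶ A` starting at `X`
whose last term `A` is indecomposable. -/
structure SPrimeTerm (ξ : ExtCat K C) (X : C) where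
  A : C
  B : C
  f : X ⟶ B
  g : B ⟶ A
  δ : ξ.Ext A X
  isReal : ξ.real f g δ
  nonsplit : δ ≠ 0
  indec : Indec A

/-- `s > t` in `S'(X)`: there is `f : A_t ⟶ A_s` with `f^* δ_s = δ_t`. -/
def SPrimeTerm.Gt {ξ : ExtCat K C} {X : C} (s t : SPrimeTerm ξ X) : Prop :=
  ∃ f : t.A ⟶ s.A, ξ.pull X f s.δ = t.δ

/-- `s ∼ t` in `S'(X)`: such an `f` can be chosen to be an isomorphism. -/
def SPrimeTerm.Sim {ξ : ExtCat K C} {X : C} (s t : SPrimeTerm ξ X) : Prop :=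
  ∃ f : t.A ⟶ s.A, IsIso f ∧ ξ.pull X f s.δ = t.δ

end STermDefs


/-! ### Auxiliary lemmas -/

section Aux
set_option linter.unusedSectionVars false

variable {K : Type w} [Field K]
variable {C : Type u} [Category.{v} C] [Preadditive C] [Linear K C] [HasFiniteBiproducts C]
variable (ξ : ExtCat K C)

namespace ExtCat

lemma push_comp (c : C) {a a' a'' : C} (f : a ⟶ a') (g : a' ⟶ a'') (δ : ξ.Ext c a) :
    ξ.push c (f ≫ g) δ = ξ.push c g (ξ.push c f δ) := by
  simp only [push, CategoryTheory.Functor.map_comp]; rfl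

lemma push_id (c : C) {a : C} (δ : ξ.Ext c a) : ξ.push c (𝟙 a) δ = δ := by
  simp only [push, CategoryTheory.Functor.map_id]; rfl

lemma pull_comp (a : C) {c c' c'' : C} (f : c'' ⟶ c') (g : c' ⟶ c) (δ : ξ.Ext c a) :
    ξ.pull a (f ≫ g) δ = ξ.pull a f (ξ.pull a g δ) := by
  simp only [pull, op_comp, CategoryTheory.Functor.map_comp]; rfl

lemma pull_id (a : C) {c : C} (δ : ξ.Ext c a) : ξ.pull a (𝟙 c) δ = δ := by
  simp only [pull, op_id, CategoryTheory.Functor.map_id]; rfl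

lemma pull_push {a a' c c' : C} (f : a ⟶ a') (g : c' ⟶ c) (δ : ξ.Ext c a) :
    ξ.pull a' g (ξ.push c f δ) = ξ.push c' f (ξ.pull a g δ) :=
  LinearMap.congr_fun (congrArg ModuleCat.Hom.hom ((ξ.E.map g.op).naturality f)) δ

lemma push_zero_mor (c : C) {a a' : C} (δ : ξ.Ext c a) :
    ξ.push c (0 : a ⟶ a') δ = 0 := by
  haveI := ξ.additive₂ (op c)
  simp only [push, CategoryTheory.Functor.map_zero]; rfl

lemma pull_zero_mor (a : C) {c c' : C} (δ : ξ.Ext c a) :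
    ξ.pull a (0 : c' ⟶ c) δ = 0 := by
  haveI := ξ.additive₁
  simp only [pull, op_zero, CategoryTheory.Functor.map_zero, Limits.zero_app]; rfl

lemma push_map_zero (c : C) {a a' : C} (f : a ⟶ a') :
    ξ.push c f (0 : ξ.Ext c a) = 0 := by
  simp only [push, map_zero]

lemma pull_map_zero (a : C) {c c' : C} (g : c' ⟶ c) :
    ξ.pull a g (0 : ξ.Ext c a) = 0 := by
  simp only [pull, map_zero]

lemma push_sub_mor (c : C) {a a' : C} (f g : a ⟶ a') (δ : ξ.Ext c a) :
    ξ.push c (f - g) δ = ξ.push c f δ - ξ.push c g δ := by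
  haveI := ξ.additive₂ (op c)
  simp only [push, CategoryTheory.Functor.map_sub]; rfl

lemma pull_sub_mor (a : C) {c c' : C} (f g : c' ⟶ c) (δ : ξ.Ext c a) :
    ξ.pull a (f - g) δ = ξ.pull a f δ - ξ.pull a g δ := by
  haveI := ξ.additive₁
  have : (f - g).op = f.op - g.op := rfl
  simp only [pull, this, CategoryTheory.Functor.map_sub]; rfl

lemma push_sum_mor (c : C) {a a' : C} {ι : Type*} (s : Finset ι) (f : ι → (a ⟶ a'))
    (δ : ξ.Ext c a) : ξ.push c (∑ i ∈ s, f i) δ = ∑ i ∈ s, ξ.push c (f i) δ := by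
  haveI := ξ.additive₂ (op c)
  simp only [push, CategoryTheory.Functor.map_sum]
  exact (LinearMap.congr_fun (ModuleCat.hom_sum _ _) δ).trans (LinearMap.sum_apply _ _ _)

lemma pull_sum_mor (a : C) {c c' : C} {ι : Type*} (s : Finset ι) (g : ι → (c' ⟶ c))
    (δ : ξ.Ext c a) : ξ.pull a (∑ i ∈ s, g i) δ = ∑ i ∈ s, ξ.pull a (g i) δ := by
  haveI := ξ.additive₁
  simp only [pull, op_sum, CategoryTheory.Functor.map_sum]
  rw [NatTrans.app_sum]
  exact (LinearMap.congr_fun (ModuleCat.hom_sum _ _) δ).trans (LinearMap.sum_apply _ _ _)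

lemma push_eq_zero_of_isIso {a a' c : C} (f : a ⟶ a') [IsIso f] {δ : ξ.Ext c a}
    (h : ξ.push c f δ = 0) : δ = 0 := by
  have := congrArg (ξ.push c (inv f)) h
  rw [← ξ.push_comp, IsIso.hom_inv_id, ξ.push_id, ξ.push_map_zero] at this
  exact this

lemma pull_eq_zero_of_isIso {a c c' : C} (g : c' ⟶ c) [IsIso g] {δ : ξ.Ext c a}
    (h : ξ.pull a g δ = 0) : δ = 0 := by
  have := congrArg (ξ.pull a (inv g)) h
  rw [← ξ.pull_comp, IsIso.inv_hom_id, ξ.pull_id, ξ.pull_map_zero] at this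
  exact this

/-- consecutive maps in an `E`-triangle compose to zero. -/
lemma comp_eq_zero {A B Cc : C} {x : A ⟶ B} {y : B ⟶ Cc} {δ : ξ.Ext Cc A}
    (h : ξ.real x y δ) : x ≫ y = 0 := by
  obtain ⟨m, hm1, hm2⟩ := ξ.real_lift (𝟙 A) (0 : Cc ⟶ Cc) (ξ.real_zero A Cc) h
    (by rw [map_zero]; exact (ξ.pull_zero_mor A δ).symm)
  have : x ≫ y = biprod.inl ≫ m ≫ y := by
    rw [← Category.assoc, hm1, Category.id_comp]
  rw [this, hm2]
  simp

/-- if the deflation of an `E`-triangle is a split epimorphism, the triangle splits. -/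
lemma eq_zero_of_section {A B Cc : C} {x : A ⟶ B} {y : B ⟶ Cc} {δ : ξ.Ext Cc A}
    (h : ξ.real x y δ) (σ : Cc ⟶ B) (hσ : σ ≫ y = 𝟙 Cc) : δ = 0 := by
  obtain ⟨f, hf1, hf2⟩ := ξ.et3op (𝟙 Cc) (biprod.desc x σ) (ξ.real_zero A Cc) h
    (by apply biprod.hom_ext' <;> simp [ξ.comp_eq_zero h, hσ])
  have : ((ξ.E.map (𝟙 Cc).op).app A) δ = δ := by
    rw [op_id, ξ.E.map_id]; rfl
  rw [this, map_zero] at hf2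
  exact hf2.symm

/-- if the triangle splits then the deflation is a split epimorphism. -/
lemma section_of_eq_zero {A B Cc : C} {x : A ⟶ B} {y : B ⟶ Cc}
    (h : ξ.real x y (0 : ξ.Ext Cc A)) : ∃ σ : Cc ⟶ B, σ ≫ y = 𝟙 Cc := by
  obtain ⟨e, he1, he2⟩ := ξ.real_unique (ξ.real_zero A Cc) h
  exact ⟨biprod.inr ≫ e.hom, by rw [Category.assoc, he2, biprod.inr_snd]⟩

/-- if the inflation of an `E`-triangle is a split monomorphism, the triangle splits. -/
lemma eq_zero_of_retraction {A B Cc : C} {x : A ⟶ B} {y : B ⟶ Cc} {δ : ξ.Ext Cc A}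
    (h : ξ.real x y δ) (ρ : B ⟶ A) (hρ : x ≫ ρ = 𝟙 A) : δ = 0 := by
  obtain ⟨g, hg1, hg2⟩ := ξ.et3 (𝟙 A) (biprod.lift ρ y) h (ξ.real_zero A Cc)
    (by apply biprod.hom_ext <;> simp [ξ.comp_eq_zero h, hρ])
  have : ((ξ.E.obj (op Cc)).map (𝟙 A)) δ = δ := by rw [CategoryTheory.Functor.map_id]; rfl
  rw [this, map_zero] at hg2
  exact hg2

/-- if the triangle splits then the inflation is a split monomorphism. -/
lemma retraction_of_eq_zero {A B Cc : C} {x : A ⟶ B} {y : B ⟶ Cc}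
    (h : ξ.real x y (0 : ξ.Ext Cc A)) : ∃ ρ : B ⟶ A, x ≫ ρ = 𝟙 A := by
  obtain ⟨e, he1, he2⟩ := ξ.real_unique (ξ.real_zero A Cc) h
  refine ⟨e.inv ≫ biprod.fst, ?_⟩
  rw [← he1, Category.assoc, Iso.hom_inv_id_assoc, biprod.inl_fst]

/-- pullback of the extension class along its own deflation vanishes. -/
lemma pull_self {A B Cc : C} {x : A ⟶ B} {y : B ⟶ Cc} {δ : ξ.Ext Cc A}
    (h : ξ.real x y δ) : ξ.pull A y δ = 0 := by
  obtain ⟨g, hg1, hg2⟩ := ξ.et3 (𝟙 A) (biprod.desc x (𝟙 B)) (ξ.real_zero A B) h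
    (by rw [biprod.inl_desc, Category.id_comp])
  have hgy : g = y := by
    have := congrArg (fun m => biprod.inr ≫ m) hg1
    simp only [biprod.inr_snd_assoc] at this
    simpa using this
  have : ((ξ.E.obj (op B)).map (𝟙 A)) (0 : ξ.Ext B A) = 0 := map_zero _
  rw [this] at hg2
  rw [← hgy]
  exact hg2.symm

/-- pushforward of the extension class along its own inflation vanishes. -/
lemma push_self {A B Cc : C} {x : A ⟶ B} {y : B ⟶ Cc} {δ : ξ.Ext Cc A}
    (h : ξ.real x y δ) : ξ.push Cc x δ = 0 := by
  obtain ⟨f, hf1, hf2⟩ := ξ.et3op (𝟙 Cc) (biprod.lift (𝟙 B) y) h (ξ.real_zero B Cc)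
    (by rw [biprod.lift_snd, Category.comp_id])
  have hfx : f = x := by
    have := congrArg (fun m => m ≫ biprod.fst) hf1
    simpa using this.symm
  have : ((ξ.E.map (𝟙 Cc).op).app B) (0 : ξ.Ext Cc B) = 0 := map_zero _
  rw [this] at hf2
  rw [← hfx]
  exact hf2

/-- exactness: a class over `Cc` killed by pulling back along the deflation `y`
is a pushforward of `δ`. -/
lemma exact_push {A B Cc : C} {x : A ⟶ B} {y : B ⟶ Cc} {δ : ξ.Ext Cc A}
    (h : ξ.real x y δ) {Z : C} (ε : ξ.Ext Cc Z) (hε : ξ.pull Z y ε = 0) :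
    ∃ h' : A ⟶ Z, ξ.push Cc h' δ = ε := by
  obtain ⟨Y, x', y', hr⟩ := ξ.real_exists ε
  obtain ⟨m₀, hm1, hm2⟩ := ξ.real_lift (𝟙 Z) y (ξ.real_zero Z B) hr
    (by rw [map_zero]; exact hε.symm)
  obtain ⟨f, hf1, hf2⟩ := ξ.et3op (𝟙 Cc) (biprod.inr ≫ m₀) h hr
    (by rw [Category.assoc, hm2, biprod.inr_snd_assoc, Category.comp_id])
  refine ⟨f, ?_⟩
  have : ((ξ.E.map (𝟙 Cc).op).app Z) ε = ε := by rw [op_id, ξ.E.map_id]; rfl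
  rw [← this]
  exact hf2

/-- exactness (dual): a class killed by pushing forward along the inflation `x`
is a pullback of `δ`. -/
lemma exact_pull {A B Cc : C} {x : A ⟶ B} {y : B ⟶ Cc} {δ : ξ.Ext Cc A}
    (h : ξ.real x y δ) {Z : C} (ε : ξ.Ext Z A) (hε : ξ.push Z x ε = 0) :
    ∃ h' : Z ⟶ Cc, ξ.pull A h' δ = ε := by
  obtain ⟨Y, x', y', hr⟩ := ξ.real_exists ε
  obtain ⟨m₀, hm1, hm2⟩ := ξ.real_lift x (𝟙 Z) hr (ξ.real_zero B Z)
    (by rw [map_zero] at *; exact hε)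
  obtain ⟨g, hg1, hg2⟩ := ξ.et3 (𝟙 A) (m₀ ≫ biprod.fst) hr h
    (by rw [← Category.assoc, hm1, Category.assoc, biprod.inl_fst, Category.comp_id,
          Category.id_comp])
  refine ⟨g, ?_⟩
  have : ((ξ.E.obj (op Z)).map (𝟙 A)) ε = ε := by rw [CategoryTheory.Functor.map_id]; rfl
  rw [← this]
  exact hg2.symm


/-- split triangle with inflation `(1,-1)` and deflation `(1,1)`. -/
lemma real_codiag (X : C) :
    ξ.real (biprod.lift (𝟙 X) (-𝟙 X)) (biprod.desc (𝟙 X) (𝟙 X)) (0 : ξ.Ext X X) := by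
  refine ξ.real_congr
    (Iso.mk (biprod.fst ≫ biprod.lift (𝟙 X) (-𝟙 X) + biprod.snd ≫ biprod.inr)
            (biprod.fst ≫ biprod.lift (𝟙 X) (𝟙 X) + biprod.snd ≫ biprod.inr)
            ?_ ?_) ?_ ?_ (ξ.real_zero X X)
  · apply biprod.hom_ext' <;> apply biprod.hom_ext <;>
      simp [Preadditive.comp_add, Preadditive.add_comp]
  · apply biprod.hom_ext' <;> apply biprod.hom_ext <;>
      simp [Preadditive.comp_add, Preadditive.add_comp]
  · simp
  · apply biprod.hom_ext' <;>
      simp [Preadditive.comp_add, Preadditive.add_comp]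

/-- split triangle with inflation `(1,1)` and deflation `(1,-1)`. -/
lemma real_diag (X : C) :
    ξ.real (biprod.lift (𝟙 X) (𝟙 X)) (biprod.desc (𝟙 X) (-𝟙 X)) (0 : ξ.Ext X X) := by
  refine ξ.real_congr
    (Iso.mk (biprod.fst ≫ biprod.lift (𝟙 X) (𝟙 X) - biprod.snd ≫ biprod.inr)
            (biprod.fst ≫ biprod.lift (𝟙 X) (𝟙 X) - biprod.snd ≫ biprod.inr)
            ?_ ?_) ?_ ?_ (ξ.real_zero X X)
  · apply biprod.hom_ext' <;> apply biprod.hom_ext <;>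
      simp [Preadditive.comp_sub, Preadditive.sub_comp]
  · apply biprod.hom_ext' <;> apply biprod.hom_ext <;>
      simp [Preadditive.comp_sub, Preadditive.sub_comp]
  · simp
  · apply biprod.hom_ext' <;>
      simp [Preadditive.comp_sub, Preadditive.sub_comp]

end ExtCat

section KS

lemma end_one_ne_zero {X : C} (h : ¬ IsZero X) : (𝟙 X : X ⟶ X) ≠ 0 :=
  fun h0 => h ((IsZero.iff_id_eq_zero X).mpr h0)

lemma isLocalRing_end_of_iso {X Y : C} (φ : X ≅ Y) (h : IsLocalRing (End Y)) :
    IsLocalRing (End X) := by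
  haveI := h.toNontrivial
  refine { toNontrivial := ?_, isUnit_or_isUnit_of_add_one := ?_ }
  · refine ⟨⟨𝟙 X, 0, fun h0 => ?_⟩⟩
    have : (1 : End Y) = 0 := by
      show 𝟙 Y = 0
      calc 𝟙 Y = φ.inv ≫ 𝟙 X ≫ φ.hom := by simp
      _ = 0 := by rw [show (𝟙 X : X ⟶ X) = 0 from h0]; simp
    exact one_ne_zero this
  · intro a b hab
    have hab' : (show End Y from φ.inv ≫ (a : X ⟶ X) ≫ φ.hom) +
        (show End Y from φ.inv ≫ (b : X ⟶ X) ≫ φ.hom) = 1 := by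
      show φ.inv ≫ (a : X ⟶ X) ≫ φ.hom + φ.inv ≫ (b : X ⟶ X) ≫ φ.hom = 𝟙 Y
      rw [← Preadditive.comp_add, ← Preadditive.add_comp]
      have : (a : X ⟶ X) + (b : X ⟶ X) = 𝟙 X := hab
      rw [this]; simp
    rcases IsLocalRing.isUnit_or_isUnit_of_add_one hab' with h' | h'
    · left
      haveI : IsIso (φ.inv ≫ (a : X ⟶ X) ≫ φ.hom) := (isUnit_iff_isIso _).mp h'
      have ha : (a : X ⟶ X) = φ.hom ≫ (φ.inv ≫ (a : X ⟶ X) ≫ φ.hom) ≫ φ.inv := by simp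
      rw [isUnit_iff_isIso]
      show IsIso (a : X ⟶ X)
      rw [ha]; infer_instance
    · right
      haveI : IsIso (φ.inv ≫ (b : X ⟶ X) ≫ φ.hom) := (isUnit_iff_isIso _).mp h'
      have hb : (b : X ⟶ X) = φ.hom ≫ (φ.inv ≫ (b : X ⟶ X) ≫ φ.hom) ≫ φ.inv := by simp
      rw [isUnit_iff_isIso]
      show IsIso (b : X ⟶ X)
      rw [hb]; infer_instance

lemma indec_of_isLocalRing_end {X : C} (h : IsLocalRing (End X)) : Indec X := by
  constructor
  · intro hz
    exact one_ne_zero (α := End X) (hz.eq_of_src (𝟙 X) 0)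
  · rintro Y Z ⟨ψ⟩
    set p : X ⟶ X := ψ.hom ≫ (biprod.fst ≫ biprod.inl) ≫ ψ.inv with hp
    set q : X ⟶ X := ψ.hom ≫ (biprod.snd ≫ biprod.inr) ≫ ψ.inv with hq
    have hpq : (show End X from p) + (show End X from q) = 1 := by
      show p + q = 𝟙 X
      rw [hp, hq, ← Preadditive.comp_add, ← Preadditive.add_comp, biprod.total]
      simp
    rcases IsLocalRing.isUnit_or_isUnit_of_add_one hpq with h' | h'
    · right
      haveI : IsIso p := (isUnit_iff_isIso _).mp h'
      have hiso : IsIso (biprod.fst ≫ biprod.inl : Y ⊞ Z ⟶ Y ⊞ Z) := by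
        have : (biprod.fst ≫ biprod.inl : Y ⊞ Z ⟶ Y ⊞ Z) = ψ.inv ≫ p ≫ ψ.hom := by
          rw [hp]; simp
        rw [this]; infer_instance
      have hc : (biprod.fst ≫ biprod.inl : Y ⊞ Z ⟶ Y ⊞ Z) = 𝟙 _ := by
        haveI := hiso
        have hidem : (biprod.fst ≫ biprod.inl : Y ⊞ Z ⟶ Y ⊞ Z) ≫
            (biprod.fst ≫ biprod.inl) =
            (biprod.fst ≫ biprod.inl : Y ⊞ Z ⟶ Y ⊞ Z) ≫ 𝟙 _ := by simp
        exact (cancel_epi (biprod.fst ≫ biprod.inl : Y ⊞ Z ⟶ Y ⊞ Z)).mp hidem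
      refine (IsZero.iff_id_eq_zero Z).mpr ?_
      have := congrArg (fun m => (biprod.inr : Z ⟶ Y ⊞ Z) ≫ m ≫ biprod.snd) hc
      simpa using this.symm
    · left
      haveI : IsIso q := (isUnit_iff_isIso _).mp h'
      have hiso : IsIso (biprod.snd ≫ biprod.inr : Y ⊞ Z ⟶ Y ⊞ Z) := by
        have : (biprod.snd ≫ biprod.inr : Y ⊞ Z ⟶ Y ⊞ Z) = ψ.inv ≫ q ≫ ψ.hom := by
          rw [hq]; simp
        rw [this]; infer_instance
      have hc : (biprod.snd ≫ biprod.inr : Y ⊞ Z ⟶ Y ⊞ Z) = 𝟙 _ := by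
        haveI := hiso
        have hidem : (biprod.snd ≫ biprod.inr : Y ⊞ Z ⟶ Y ⊞ Z) ≫
            (biprod.snd ≫ biprod.inr) =
            (biprod.snd ≫ biprod.inr : Y ⊞ Z ⟶ Y ⊞ Z) ≫ 𝟙 _ := by simp
        exact (cancel_epi (biprod.snd ≫ biprod.inr : Y ⊞ Z ⟶ Y ⊞ Z)).mp hidem
      refine (IsZero.iff_id_eq_zero Y).mpr ?_
      have := congrArg (fun m => (biprod.inl : Y ⟶ Y ⊞ Z) ≫ m ≫ biprod.fst) hc
      simpa using this.symm

lemma isZero_biproduct_fin_zero (f : Fin 0 → C) : IsZero (⨁ f) := by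
  refine (IsZero.iff_id_eq_zero _).mpr ?_
  rw [← biproduct.total]
  simp

/-- splitting off the first summand of a biproduct over `Fin (n+1)`. -/
def finSplit {n : ℕ} (f : Fin (n + 1) → C) :
    (⨁ f) ≅ f 0 ⊞ ⨁ (fun i : Fin n => f i.succ) where
  hom := biprod.lift (biproduct.π f 0) (biproduct.lift fun i => biproduct.π f i.succ)
  inv := biprod.desc (biproduct.ι f 0) (biproduct.desc fun i => biproduct.ι f i.succ)
  hom_inv_id := by
    rw [biprod.lift_desc, biproduct.lift_desc, ← biproduct.total, Fin.sum_univ_succ]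
  inv_hom_id := by
    apply biprod.hom_ext'
    · apply biprod.hom_ext
      · simp
      · apply biproduct.hom_ext
        intro j
        simp [biproduct.ι_π, Ne.symm (Fin.succ_ne_zero j)]
    · apply biprod.hom_ext
      · apply biproduct.hom_ext'
        intro j
        simp [biproduct.ι_π, Fin.succ_ne_zero j]
      · apply biproduct.hom_ext'
        intro j
        apply biproduct.hom_ext
        intro k
        simp [biproduct.ι_π]

def isoOfIsZeroLeft {Y Z : C} (h : IsZero Y) : Y ⊞ Z ≅ Z where
  hom := biprod.snd
  inv := biprod.inr
  hom_inv_id := by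
    apply biprod.hom_ext'
    · apply h.eq_of_src
    · simp
  inv_hom_id := by simp

def isoOfIsZeroRight {Y Z : C} (h : IsZero Z) : Y ⊞ Z ≅ Y where
  hom := biprod.fst
  inv := biprod.inl
  hom_inv_id := by
    apply biprod.hom_ext'
    · simp
    · apply h.eq_of_src
  inv_hom_id := by simp

lemma isLocalRing_end_of_indec (hKS : IsKrullSchmidt C) {X : C} (hX : Indec X) :
    IsLocalRing (End X) := by
  obtain ⟨n, f, hloc, ⟨φ⟩⟩ := hKS X
  induction n generalizing X with
  | zero => exact absurd ((isZero_biproduct_fin_zero f).of_iso φ) hX.1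
  | succ n ih =>
    have φ₂ : X ≅ f 0 ⊞ ⨁ (fun i : Fin n => f i.succ) := φ ≪≫ finSplit f
    rcases hX.2 (f 0) (⨁ fun i : Fin n => f i.succ) ⟨φ₂⟩ with h0 | hrest
    · exact ih hX (fun i => f i.succ) (fun i => hloc i.succ)
        (φ₂ ≪≫ isoOfIsZeroLeft h0)
    · exact isLocalRing_end_of_iso (φ₂ ≪≫ isoOfIsZeroRight hrest) (hloc 0)

end KS

section Main

namespace ExtCat

lemma isIso_of_push_fixed {X A : C} (hA : IsLocalRing (End A)) (h : A ⟶ A)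
    (δ : ξ.Ext X A) (hδ : δ ≠ 0) (hp : ξ.push X h δ = δ) : IsIso h := by
  haveI := hA
  have hsum : (show End A from h) + (show End A from 𝟙 A - h) = 1 := by
    show h + (𝟙 A - h) = 𝟙 A
    abel
  rcases IsLocalRing.isUnit_or_isUnit_of_add_one hsum with hu | hu
  · exact (isUnit_iff_isIso _).mp hu
  · exfalso
    haveI : IsIso (𝟙 A - h) := (isUnit_iff_isIso _).mp hu
    have hz : ξ.push X (𝟙 A - h) δ = 0 := by
      rw [ξ.push_sub_mor, ξ.push_id, hp, sub_self]
    exact hδ (ξ.push_eq_zero_of_isIso _ hz)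

lemma isIso_of_pull_fixed {X A : C} (hA : IsLocalRing (End A)) (h : A ⟶ A)
    (δ : ξ.Ext A X) (hδ : δ ≠ 0) (hp : ξ.pull X h δ = δ) : IsIso h := by
  haveI := hA
  have hsum : (show End A from h) + (show End A from 𝟙 A - h) = 1 := by
    show h + (𝟙 A - h) = 𝟙 A
    abel
  rcases IsLocalRing.isUnit_or_isUnit_of_add_one hsum with hu | hu
  · exact (isUnit_iff_isIso _).mp hu
  · exfalso
    haveI : IsIso (𝟙 A - h) := (isUnit_iff_isIso _).mp hu
    have hz : ξ.pull X (𝟙 A - h) δ = 0 := by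
      rw [ξ.pull_sub_mor, ξ.pull_id, hp, sub_self]
    exact hδ (ξ.pull_eq_zero_of_isIso _ hz)

/-- (i) for `S(X)`. -/
lemma S_antisymm (hKS : IsKrullSchmidt C) {X : C} (s t : STerm ξ X)
    (hst : s.Gt t) (hts : t.Gt s) : s.Sim t := by
  obtain ⟨f, hf⟩ := hst
  obtain ⟨g, hg⟩ := hts
  have hfg : ξ.push X (f ≫ g) s.δ = s.δ := by rw [ξ.push_comp, hf, hg]
  have hgf : ξ.push X (g ≫ f) t.δ = t.δ := by rw [ξ.push_comp, hg, hf]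
  haveI h1 : IsIso (f ≫ g) :=
    ξ.isIso_of_push_fixed (isLocalRing_end_of_indec hKS s.indec) _ s.δ s.nonsplit hfg
  haveI h2 : IsIso (g ≫ f) :=
    ξ.isIso_of_push_fixed (isLocalRing_end_of_indec hKS t.indec) _ t.δ t.nonsplit hgf
  have hr : (inv (g ≫ f) ≫ g) ≫ f = 𝟙 t.A := by
    rw [Category.assoc]; exact IsIso.inv_hom_id _
  have hfm : f ≫ (g ≫ inv (f ≫ g)) = 𝟙 s.A := by
    rw [← Category.assoc]; exact IsIso.hom_inv_id _
  have hm : g ≫ inv (f ≫ g) = inv (g ≫ f) ≫ g := by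
    calc g ≫ inv (f ≫ g)
        = ((inv (g ≫ f) ≫ g) ≫ f) ≫ (g ≫ inv (f ≫ g)) := by
          rw [hr, Category.id_comp]
      _ = (inv (g ≫ f) ≫ g) ≫ (f ≫ (g ≫ inv (f ≫ g))) := by
          simp only [Category.assoc]
      _ = inv (g ≫ f) ≫ g := by rw [hfm, Category.comp_id]
  have hfi : IsIso f := ⟨⟨g ≫ inv (f ≫ g), hfm, by rw [hm]; exact hr⟩⟩
  exact ⟨f, hfi, hf⟩

/-- (i) for `S'(X)`. -/
lemma S'_antisymm (hKS : IsKrullSchmidt C) {X : C} (s t : SPrimeTerm ξ X)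
    (hst : s.Gt t) (hts : t.Gt s) : s.Sim t := by
  obtain ⟨f, hf⟩ := hst
  obtain ⟨g, hg⟩ := hts
  have hfg : ξ.pull X (f ≫ g) t.δ = t.δ := by rw [ξ.pull_comp, hg, hf]
  have hgf : ξ.pull X (g ≫ f) s.δ = s.δ := by rw [ξ.pull_comp, hf, hg]
  haveI h1 : IsIso (f ≫ g) :=
    ξ.isIso_of_pull_fixed (isLocalRing_end_of_indec hKS t.indec) _ t.δ t.nonsplit hfg
  haveI h2 : IsIso (g ≫ f) :=
    ξ.isIso_of_pull_fixed (isLocalRing_end_of_indec hKS s.indec) _ s.δ s.nonsplit hgf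
  have hr : (inv (g ≫ f) ≫ g) ≫ f = 𝟙 s.A := by
    rw [Category.assoc]; exact IsIso.inv_hom_id _
  have hfm : f ≫ (g ≫ inv (f ≫ g)) = 𝟙 t.A := by
    rw [← Category.assoc]; exact IsIso.hom_inv_id _
  have hm : g ≫ inv (f ≫ g) = inv (g ≫ f) ≫ g := by
    calc g ≫ inv (f ≫ g)
        = ((inv (g ≫ f) ≫ g) ≫ f) ≫ (g ≫ inv (f ≫ g)) := by
          rw [hr, Category.id_comp]
      _ = (inv (g ≫ f) ≫ g) ≫ (f ≫ (g ≫ inv (f ≫ g))) := by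
          simp only [Category.assoc]
      _ = inv (g ≫ f) ≫ g := by rw [hfm, Category.comp_id]
  have hfi : IsIso f := ⟨⟨g ≫ inv (f ≫ g), hfm, by rw [hm]; exact hr⟩⟩
  exact ⟨f, hfi, hf⟩

/-- (ii) for `S(X)`. -/
lemma S_trans {X : C} (s t u : STerm ξ X) (hst : s.Gt t) (htu : t.Gt u) : s.Gt u := by
  obtain ⟨f, hf⟩ := hst
  obtain ⟨g, hg⟩ := htu
  exact ⟨f ≫ g, by rw [ξ.push_comp, hf, hg]⟩

/-- (ii) for `S'(X)`. -/
lemma S'_trans {X : C} (s t u : SPrimeTerm ξ X) (hst : s.Gt t) (htu : t.Gt u) : s.Gt u := by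
  obtain ⟨f, hf⟩ := hst
  obtain ⟨g, hg⟩ := htu
  exact ⟨g ≫ f, by rw [ξ.pull_comp, hf, hg]⟩

lemma exists_indec_push (hKS : IsKrullSchmidt C) {X W : C} (ρ : ξ.Ext X W) (hρ : ρ ≠ 0) :
    ∃ (Z : C) (p : W ⟶ Z), Indec Z ∧ ξ.push X p ρ ≠ 0 := by
  obtain ⟨n, f, hloc, ⟨φ⟩⟩ := hKS W
  by_contra hcon
  push_neg at hcon
  apply hρ
  have h1 : (𝟙 W : W ⟶ W) =
      ∑ i : Fin n, (φ.hom ≫ biproduct.π f i) ≫ (biproduct.ι f i ≫ φ.inv) := by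
    calc (𝟙 W : W ⟶ W) = φ.hom ≫ 𝟙 (⨁ f) ≫ φ.inv := by simp
      _ = _ := by
        rw [← biproduct.total, Preadditive.sum_comp, Preadditive.comp_sum]
        simp only [Category.assoc]
  calc ρ = ξ.push X (𝟙 W) ρ := (ξ.push_id X ρ).symm
    _ = ∑ i : Fin n, ξ.push X ((φ.hom ≫ biproduct.π f i) ≫ (biproduct.ι f i ≫ φ.inv)) ρ := by
        rw [h1, ξ.push_sum_mor]
    _ = 0 := by
        refine Finset.sum_eq_zero fun i _ => ?_
        rw [ξ.push_comp, hcon (f i) (φ.hom ≫ biproduct.π f i)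
          (indec_of_isLocalRing_end (hloc i)), ξ.push_map_zero]

lemma exists_indec_pull (hKS : IsKrullSchmidt C) {X W : C} (ρ : ξ.Ext W X) (hρ : ρ ≠ 0) :
    ∃ (Z : C) (q : Z ⟶ W), Indec Z ∧ ξ.pull X q ρ ≠ 0 := by
  obtain ⟨n, f, hloc, ⟨φ⟩⟩ := hKS W
  by_contra hcon
  push_neg at hcon
  apply hρ
  have h1 : (𝟙 W : W ⟶ W) =
      ∑ i : Fin n, (φ.hom ≫ biproduct.π f i) ≫ (biproduct.ι f i ≫ φ.inv) := by
    calc (𝟙 W : W ⟶ W) = φ.hom ≫ 𝟙 (⨁ f) ≫ φ.inv := by simp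
      _ = _ := by
        rw [← biproduct.total, Preadditive.sum_comp, Preadditive.comp_sum]
        simp only [Category.assoc]
  calc ρ = ξ.pull X (𝟙 W) ρ := (ξ.pull_id X ρ).symm
    _ = ∑ i : Fin n, ξ.pull X ((φ.hom ≫ biproduct.π f i) ≫ (biproduct.ι f i ≫ φ.inv)) ρ := by
        rw [h1, ξ.pull_sum_mor]
    _ = 0 := by
        refine Finset.sum_eq_zero fun i _ => ?_
        rw [ξ.pull_comp, hcon (f i) (biproduct.ι f i ≫ φ.inv)
          (indec_of_isLocalRing_end (hloc i)), ξ.pull_map_zero]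

/-- (iii) for `S(X)`. -/
lemma S_directed (hKS : IsKrullSchmidt C) {X : C} (hX : Indec X) (s t : STerm ξ X) :
    ∃ u : STerm ξ X, s.Gt u ∧ t.Gt u := by
  haveI hXloc : IsLocalRing (End X) := isLocalRing_end_of_indec hKS hX
  obtain ⟨Eo, d, e, h', ρ, h1, h2, h3, h4, h5, h6⟩ :=
    ξ.et4op (ξ.real_sum s.isReal t.isReal) (ξ.real_codiag X)
  set G : s.B ⊞ t.B ⟶ X := biprod.map s.g t.g ≫ biprod.desc (𝟙 X) (𝟙 X) with hGdef
  have hGl : biprod.inl ≫ G = s.g := by rw [hGdef]; simp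
  have hGr : biprod.inr ≫ G = t.g := by rw [hGdef]; simp
  have hρ : ρ ≠ 0 := by
    intro h0
    rw [h0] at h1
    obtain ⟨σ, hσ⟩ := ξ.section_of_eq_zero h1
    have hsum : (show End X from (σ ≫ biprod.fst) ≫ s.g) +
        (show End X from (σ ≫ biprod.snd) ≫ t.g) = 1 := by
      show (σ ≫ biprod.fst) ≫ s.g + (σ ≫ biprod.snd) ≫ t.g = 𝟙 X
      rw [← hσ, ← hGl, ← hGr]
      conv_rhs => rw [← Category.id_comp G, ← biprod.total]
      simp only [Preadditive.add_comp, Preadditive.comp_add, Category.assoc]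
    rcases IsLocalRing.isUnit_or_isUnit_of_add_one hsum with hu | hu
    · haveI : IsIso ((σ ≫ biprod.fst) ≫ s.g) := (isUnit_iff_isIso _).mp hu
      have hs : (inv ((σ ≫ biprod.fst) ≫ s.g) ≫ σ ≫ biprod.fst) ≫ s.g = 𝟙 X := by
        have : (inv ((σ ≫ biprod.fst) ≫ s.g) ≫ σ ≫ biprod.fst) ≫ s.g
            = inv ((σ ≫ biprod.fst) ≫ s.g) ≫ ((σ ≫ biprod.fst) ≫ s.g) := by
          simp only [Category.assoc]
        rw [this, IsIso.inv_hom_id]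
      exact s.nonsplit (ξ.eq_zero_of_section s.isReal _ hs)
    · haveI : IsIso ((σ ≫ biprod.snd) ≫ t.g) := (isUnit_iff_isIso _).mp hu
      have ht : (inv ((σ ≫ biprod.snd) ≫ t.g) ≫ σ ≫ biprod.snd) ≫ t.g = 𝟙 X := by
        have : (inv ((σ ≫ biprod.snd) ≫ t.g) ≫ σ ≫ biprod.snd) ≫ t.g
            = inv ((σ ≫ biprod.snd) ≫ t.g) ≫ ((σ ≫ biprod.snd) ≫ t.g) := by
          simp only [Category.assoc]
        rw [this, IsIso.inv_hom_id]
      exact t.nonsplit (ξ.eq_zero_of_section t.isReal _ ht)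
  have hG0 : ξ.pull Eo G ρ = 0 := ξ.pull_self h1
  obtain ⟨Z, p, hZ, hpne⟩ := ξ.exists_indec_push hKS ρ hρ
  obtain ⟨Bu, fu, gu, hru⟩ := ξ.real_exists (ξ.push X p ρ)
  have hps : ξ.pull Z s.g (ξ.push X p ρ) = 0 := by
    rw [← hGl, ξ.pull_comp, ξ.pull_push, hG0, ξ.push_map_zero, ξ.pull_map_zero]
  have hpt : ξ.pull Z t.g (ξ.push X p ρ) = 0 := by
    rw [← hGr, ξ.pull_comp, ξ.pull_push, hG0, ξ.push_map_zero, ξ.pull_map_zero]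
  obtain ⟨hs, hhs⟩ := ξ.exact_push s.isReal (ξ.push X p ρ) hps
  obtain ⟨ht, hht⟩ := ξ.exact_push t.isReal (ξ.push X p ρ) hpt
  exact ⟨⟨Z, Bu, fu, gu, ξ.push X p ρ, hru, hpne, hZ⟩, ⟨hs, hhs⟩, ⟨ht, hht⟩⟩

/-- (iii) for `S'(X)`. -/
lemma S'_directed (hKS : IsKrullSchmidt C) {X : C} (hX : Indec X) (s t : SPrimeTerm ξ X) :
    ∃ u : SPrimeTerm ξ X, s.Gt u ∧ t.Gt u := by
  haveI hXloc : IsLocalRing (End X) := isLocalRing_end_of_indec hKS hX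
  obtain ⟨Eo, d, e, h', ρ, h1, h2, h3, h4, h5, h6⟩ :=
    ξ.et4 (ξ.real_diag X) (ξ.real_sum s.isReal t.isReal)
  set F : X ⟶ s.B ⊞ t.B := biprod.lift (𝟙 X) (𝟙 X) ≫ biprod.map s.f t.f with hFdef
  have hFl : F ≫ biprod.fst = s.f := by rw [hFdef]; simp
  have hFr : F ≫ biprod.snd = t.f := by rw [hFdef]; simp
  have hρ : ρ ≠ 0 := by
    intro h0
    rw [h0] at h1
    obtain ⟨σ, hσ⟩ := ξ.retraction_of_eq_zero h1
    have hsum : (show End X from s.f ≫ (biprod.inl ≫ σ)) +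
        (show End X from t.f ≫ (biprod.inr ≫ σ)) = 1 := by
      show s.f ≫ (biprod.inl ≫ σ) + t.f ≫ (biprod.inr ≫ σ) = 𝟙 X
      rw [← hσ, ← hFl, ← hFr]
      conv_rhs => rw [← Category.comp_id F, ← biprod.total]
      simp only [Preadditive.add_comp, Preadditive.comp_add, Category.assoc]
    rcases IsLocalRing.isUnit_or_isUnit_of_add_one hsum with hu | hu
    · haveI : IsIso (s.f ≫ (biprod.inl ≫ σ)) := (isUnit_iff_isIso _).mp hu
      have hs : s.f ≫ ((biprod.inl ≫ σ) ≫ inv (s.f ≫ (biprod.inl ≫ σ))) = 𝟙 X := by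
        rw [← Category.assoc, IsIso.hom_inv_id]
      exact s.nonsplit (ξ.eq_zero_of_retraction s.isReal _ hs)
    · haveI : IsIso (t.f ≫ (biprod.inr ≫ σ)) := (isUnit_iff_isIso _).mp hu
      have ht : t.f ≫ ((biprod.inr ≫ σ) ≫ inv (t.f ≫ (biprod.inr ≫ σ))) = 𝟙 X := by
        rw [← Category.assoc, IsIso.hom_inv_id]
      exact t.nonsplit (ξ.eq_zero_of_retraction t.isReal _ ht)
  have hF0 : ξ.push Eo F ρ = 0 := ξ.push_self h1
  obtain ⟨Z, q, hZ, hqne⟩ := ξ.exists_indec_pull hKS ρ hρ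
  obtain ⟨Bu, fu, gu, hru⟩ := ξ.real_exists (ξ.pull X q ρ)
  have hps : ξ.push Z s.f (ξ.pull X q ρ) = 0 := by
    rw [← hFl, ξ.push_comp, ← ξ.pull_push, hF0, ξ.pull_map_zero, ξ.push_map_zero]
  have hpt : ξ.push Z t.f (ξ.pull X q ρ) = 0 := by
    rw [← hFr, ξ.push_comp, ← ξ.pull_push, hF0, ξ.pull_map_zero, ξ.push_map_zero]
  obtain ⟨hs, hhs⟩ := ξ.exact_pull s.isReal (ξ.pull X q ρ) hps
  obtain ⟨ht, hht⟩ := ξ.exact_pull t.isReal (ξ.pull X q ρ) hpt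
  exact ⟨⟨Z, Bu, fu, gu, ξ.pull X q ρ, hru, hqne, hZ⟩, ⟨hs, hhs⟩, ⟨ht, hht⟩⟩

end ExtCat

end Main

end Aux

theorem stmt1 (K : Type w) [Field K] (C : Type u) [Category.{v} C] [Preadditive C]
    [Linear K C] [HasFiniteBiproducts C] (hKS : IsKrullSchmidt C) (ξ : ExtCat K C)
    (homFin : ∀ X Y : C, FiniteDimensional K (X ⟶ Y))
    (extFin : ∀ X Y : C, FiniteDimensional K (ξ.Ext X Y))
    (X : C) (hX : Indec X) :
    ((∀ s t : STerm ξ X, s.Gt t → t.Gt s → s.Sim t) ∧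
     (∀ s t u : STerm ξ X, s.Gt t → t.Gt u → s.Gt u) ∧
     (∀ s t : STerm ξ X, ∃ u : STerm ξ X, s.Gt u ∧ t.Gt u)) ∧
    ((∀ s t : SPrimeTerm ξ X, s.Gt t → t.Gt s → s.Sim t) ∧
     (∀ s t u : SPrimeTerm ξ X, s.Gt t → t.Gt u → s.Gt u) ∧
     (∀ s t : SPrimeTerm ξ X, ∃ u : SPrimeTerm ξ X, s.Gt u ∧ t.Gt u)) := by
  exact ⟨⟨fun s t hst hts => ξ.S_antisymm hKS s t hst hts,
          fun s t u hst htu => ξ.S_trans s t u hst htu,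
          fun s t => ξ.S_directed hKS hX s t⟩,
         ⟨fun s t hst hts => ξ.S'_antisymm hKS s t hst hts,
          fun s t u hst htu => ξ.S'_trans s t u hst htu,
          fun s t => ξ.S'_directed hKS hX s t⟩⟩
end
end

section
/- Let C be a locally finite, Krull-Schmidt, K-linear extriangulated category (K a field) with dim_K Hom_C(X,Y) < ∞ and dim_K E(X,Y) < ∞ for all X,Y ∈ C. Then for any object A ∈ C there is a positive integer n such that rad^n(−, A) = 0, and a positive integer m such that rad^m(A, −) = 0, where rad(−,−) denotes the radical of the category C. -/
open CategoryTheory CategoryTheory.Limits Opposite ZeroObject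

attribute [local instance] CategoryTheory.Limits.hasBinaryBiproducts_of_finite_biproducts

universe w v u

noncomputable section

/-- A morphism lies in the Jacobson radical of the category: `f ∈ rad(A, B)` iff
`𝟙 A - f ≫ g` is invertible for every `g : B ⟶ A`. -/
def IsRadMor {C : Type u} [Category.{v} C] [Preadditive C] {A B : C} (f : A ⟶ B) : Prop :=
  ∀ g : B ⟶ A, IsIso (𝟙 A - f ≫ g)

/-- `RadComp n A B φ` says that `φ : A ⟶ B` is a composite of `n` radical morphisms.
Thus `rad^n(A, B) = 0` precisely when every such composite vanishes. -/
inductive RadComp {C : Type u} [Category.{v} C] [Preadditive C] :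
    ℕ → ∀ (A B : C), (A ⟶ B) → Prop
  | single {A B : C} (f : A ⟶ B) : IsRadMor f → RadComp 1 A B f
  | comp {n : ℕ} {A M B : C} (f : A ⟶ M) (g : M ⟶ B) :
      IsRadMor f → RadComp n M B g → RadComp (n + 1) A B (f ≫ g)

section RadLemmas

variable {C : Type u} [Category.{v} C] [Preadditive C]

theorem isIso_one_sub_swap {X Y : C} (a : X ⟶ Y) (b : Y ⟶ X)
    (h : IsIso (𝟙 X - a ≫ b)) : IsIso (𝟙 Y - b ≫ a) := by
  refine ⟨⟨𝟙 Y + b ≫ inv (𝟙 X - a ≫ b) ≫ a, ?_, ?_⟩⟩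
  · have hc : inv (𝟙 X - a ≫ b) - a ≫ b ≫ inv (𝟙 X - a ≫ b) = 𝟙 X := by
      have h0 := IsIso.hom_inv_id (𝟙 X - a ≫ b)
      simp only [Preadditive.sub_comp, Category.id_comp, Category.assoc] at h0
      exact h0
    calc (𝟙 Y - b ≫ a) ≫ (𝟙 Y + b ≫ inv (𝟙 X - a ≫ b) ≫ a)
        = 𝟙 Y - b ≫ a + b ≫ (inv (𝟙 X - a ≫ b) - a ≫ b ≫ inv (𝟙 X - a ≫ b)) ≫ a := by
          simp only [Preadditive.comp_add, Preadditive.add_comp, Preadditive.sub_comp,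
            Preadditive.comp_sub, Category.comp_id, Category.id_comp, Category.assoc]
      _ = 𝟙 Y := by rw [hc]; simp
  · have hc : inv (𝟙 X - a ≫ b) - inv (𝟙 X - a ≫ b) ≫ a ≫ b = 𝟙 X := by
      have h0 := IsIso.inv_hom_id (𝟙 X - a ≫ b)
      simp only [Preadditive.comp_sub, Category.comp_id, Category.assoc] at h0
      exact h0
    calc (𝟙 Y + b ≫ inv (𝟙 X - a ≫ b) ≫ a) ≫ (𝟙 Y - b ≫ a)
        = 𝟙 Y - b ≫ a + b ≫ (inv (𝟙 X - a ≫ b) - inv (𝟙 X - a ≫ b) ≫ a ≫ b) ≫ a := by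
          simp only [Preadditive.comp_add, Preadditive.add_comp, Preadditive.sub_comp,
            Preadditive.comp_sub, Category.comp_id, Category.id_comp, Category.assoc]
          abel
      _ = 𝟙 Y := by rw [hc]; simp

theorem IsRadMor.postcomp {A B D : C} {f : A ⟶ B} (hf : IsRadMor f) (v : B ⟶ D) :
    IsRadMor (f ≫ v) := fun g => by
  have := hf (v ≫ g); simpa [Category.assoc] using this

theorem IsRadMor.precomp {A B X : C} {f : A ⟶ B} (hf : IsRadMor f) (u : X ⟶ A) :
    IsRadMor (u ≫ f) := fun g => by
  have h : IsIso (𝟙 A - (f ≫ g) ≫ u) := by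
    have := hf (g ≫ u); simpa [Category.assoc] using this
  have := isIso_one_sub_swap (f ≫ g) u h
  simpa [Category.assoc] using this

theorem IsRadMor.zero (A B : C) : IsRadMor (0 : A ⟶ B) := fun g => by simp; infer_instance

theorem IsRadMor.add {A B : C} {f f' : A ⟶ B} (hf : IsRadMor f) (hf' : IsRadMor f') :
    IsRadMor (f + f') := fun g => by
  have h1 : IsIso (𝟙 A - f ≫ g) := hf g
  have h5 : IsIso (𝟙 A - inv (𝟙 A - f ≫ g) ≫ (f' ≫ g)) := by
    refine isIso_one_sub_swap (f' ≫ g) _ ?_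
    have := hf' (g ≫ inv (𝟙 A - f ≫ g)); simpa [Category.assoc] using this
  have key : 𝟙 A - (f + f') ≫ g
      = (𝟙 A - f ≫ g) ≫ (𝟙 A - inv (𝟙 A - f ≫ g) ≫ (f' ≫ g)) := by
    rw [Preadditive.comp_sub, Category.comp_id, ← Category.assoc, IsIso.hom_inv_id,
      Category.id_comp, Preadditive.add_comp]
    abel
  rw [key]; infer_instance

end RadLemmas

section RadLin

variable {K : Type w} [Field K]
variable {C : Type u} [Category.{v} C] [Preadditive C] [Linear K C]

theorem IsRadMor.ksmul {A B : C} {f : A ⟶ B} (hf : IsRadMor f) (k : K) :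
    IsRadMor (k • f) := fun g => by
  have := hf (k • g)
  simpa [CategoryTheory.Linear.smul_comp, CategoryTheory.Linear.comp_smul] using this

/-- The radical of `End G`, as a `K`-submodule. -/
def radSub (K : Type w) [Field K] {C : Type u} [Category.{v} C] [Preadditive C] [Linear K C]
    (G : C) : Submodule K (CategoryTheory.End G) where
  carrier := {x | IsRadMor (x : G ⟶ G)}
  add_mem' := fun h h' => h.add h'
  zero_mem' := IsRadMor.zero G G
  smul_mem' := fun k x hx => hx.ksmul k

theorem mem_radSub {G : C} {x : CategoryTheory.End G} :
    x ∈ radSub K G ↔ IsRadMor (x : G ⟶ G) := Iff.rfl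

theorem radSub_mul_self {G : C} : radSub K G * radSub K G ≤ radSub K G := by
  rw [Submodule.mul_le]
  intro x hx y hy
  rw [mem_radSub] at *
  rw [CategoryTheory.End.mul_def]
  exact hx.precomp _

end RadLin

section NakSec

variable {K : Type w} [Field K]
variable {C : Type u} [Category.{v} C] [Preadditive C] [Linear K C]

theorem radSub.mul_mem_left {G : C} (r : CategoryTheory.End G) {x : CategoryTheory.End G}
    (hx : x ∈ radSub K G) : r * x ∈ radSub K G := by
  rw [mem_radSub] at *
  rw [CategoryTheory.End.mul_def]
  exact hx.postcomp r

theorem radSub.mul_mem_right {G : C} (r : CategoryTheory.End G) {x : CategoryTheory.End G}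
    (hx : x ∈ radSub K G) : x * r ∈ radSub K G := by
  rw [mem_radSub] at *
  rw [CategoryTheory.End.mul_def]
  exact hx.precomp r

/-- Nakayama-style descent: a submodule of `End G` all of whose elements admit
representations with radical coefficients over `n` generators is zero. -/
theorem nak_aux {G : C} (V : Submodule K (CategoryTheory.End G)) :
    ∀ (n : ℕ) (v : Fin n → CategoryTheory.End G), (∀ i, v i ∈ V) →
      (∀ w ∈ V, ∃ b : Fin n → CategoryTheory.End G,
        (∀ i, b i ∈ radSub K G) ∧ w = ∑ i, v i * b i) → V = ⊥ := by
  intro n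
  induction n with
  | zero =>
    intro v _ hgen
    rw [eq_bot_iff]
    intro w hw
    obtain ⟨b, -, hb⟩ := hgen w hw
    simpa using hb
  | succ n ih =>
    intro v hv hgen
    obtain ⟨d, hdJ, hd⟩ := hgen (v (Fin.last n)) (hv _)
    set β := d (Fin.last n) with hβdef
    have hβ : IsRadMor (β : G ⟶ G) := hdJ _
    have hI : IsIso ((1 : CategoryTheory.End G) - β) := by
      have := hβ (𝟙 G); simpa using this
    set u : CategoryTheory.End G := CategoryTheory.inv ((1 : CategoryTheory.End G) - β) with hudef
    have hu : ((1 : CategoryTheory.End G) - β) * u = 1 := by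
      rw [CategoryTheory.End.mul_def]
      exact IsIso.inv_hom_id _
    -- v_last * (1 - β) = ∑_{i<n} v i * d i
    have h2 : v (Fin.last n) * ((1 : CategoryTheory.End G) - β)
        = ∑ i : Fin n, v (Fin.castSucc i) * d (Fin.castSucc i) := by
      rw [mul_sub, mul_one]
      nth_rewrite 1 [hd]
      rw [Fin.sum_univ_castSucc]
      simp [← hβdef]
    have h3 : v (Fin.last n) = ∑ i : Fin n, v (Fin.castSucc i) * (d (Fin.castSucc i) * u) := by
      have := congrArg (· * u) h2
      rw [mul_assoc, hu, mul_one] at this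
      rw [this, Finset.sum_mul]
      simp [mul_assoc]
    refine ih (fun i => v (Fin.castSucc i)) (fun i => hv _) ?_
    intro w hw
    obtain ⟨b, hbJ, hb⟩ := hgen w hw
    refine ⟨fun i => b (Fin.castSucc i) + d (Fin.castSucc i) * (u * b (Fin.last n)), ?_, ?_⟩
    · intro i
      exact (radSub K G).add_mem (hbJ _) (radSub.mul_mem_right _ (hdJ _))
    · rw [hb, Fin.sum_univ_castSucc]
      nth_rewrite 1 [h3]
      rw [Finset.sum_mul, ← Finset.sum_add_distrib]
      congr 1
      funext i
      rw [mul_add]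
      congr 1
      simp [mul_assoc]

theorem radSub_pow_eq_bot (G : C) [FiniteDimensional K (CategoryTheory.End G)] :
    ∃ t : ℕ, 0 < t ∧ radSub K G ^ t = ⊥ := by
  -- the powers are an antitone chain
  have hanti : ∀ k : ℕ, radSub K G ^ (k + 2) ≤ radSub K G ^ (k + 1) := by
    intro k
    induction k with
    | zero =>
      rw [show (2 : ℕ) = 1 + 1 from rfl, pow_succ, pow_one]
      exact Submodule.mul_le.mpr fun x hx y hy => radSub_mul_self (Submodule.mul_mem_mul hx hy)
    | succ k ih =>
      rw [show k + 1 + 2 = (k + 2) + 1 from rfl, show k + 2 = (k + 1) + 1 from rfl,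
        pow_succ, pow_succ]
      exact mul_le_mul' ih le_rfl
  -- they stabilize
  have hstab : ∃ t : ℕ, radSub K G ^ (t + 2) = radSub K G ^ (t + 1) := by
    by_contra hcon
    push_neg at hcon
    have hlt : ∀ k : ℕ, Module.finrank K (radSub K G ^ (k + 2) : Submodule K _)
        < Module.finrank K (radSub K G ^ (k + 1) : Submodule K _) := fun k =>
      Submodule.finrank_lt_finrank_of_lt (lt_of_le_of_ne (hanti k) (hcon k))
    have hdesc : ∀ k : ℕ, Module.finrank K (radSub K G ^ (k + 1) : Submodule K _) + k
        ≤ Module.finrank K (radSub K G ^ 1 : Submodule K _) := by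
      intro k
      induction k with
      | zero => simp
      | succ k ih =>
        have h1 := hlt k
        have h2 : k + 1 + 1 = k + 2 := rfl
        rw [h2]
        omega
    have := hdesc (Module.finrank K (radSub K G ^ 1 : Submodule K _) + 1)
    omega
  obtain ⟨t, ht⟩ := hstab
  -- Nakayama: V := radSub^(t+1) satisfies V = V * radSub, hence V = ⊥
  set V : Submodule K (CategoryTheory.End G) := radSub K G ^ (t + 1) with hVdef
  have hVJ : V * radSub K G = V := by rw [hVdef, ← pow_succ]; exact ht
  obtain ⟨m, vgen, hspan⟩ :=
    Submodule.fg_iff_exists_fin_generating_family.mp (IsNoetherian.noetherian V)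
  have hvV : ∀ i, vgen i ∈ V := fun i => hspan ▸ Submodule.subset_span ⟨i, rfl⟩
  have hgen : ∀ w ∈ V, ∃ b : Fin m → CategoryTheory.End G,
      (∀ i, b i ∈ radSub K G) ∧ w = ∑ i, vgen i * b i := by
    intro w hw
    rw [← hVJ] at hw
    refine Submodule.mul_induction_on hw ?_ ?_
    · intro x hx y hy
      have hx' : x ∈ Submodule.span K (Set.range vgen) := hspan.symm ▸ hx
      obtain ⟨c, hc⟩ := (Finsupp.mem_span_range_iff_exists_finsupp).mp hx'
      refine ⟨fun i => c i • y, fun i => (radSub K G).smul_mem _ hy, ?_⟩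
      rw [← hc, Finsupp.sum_fintype _ _ (by simp), Finset.sum_mul]
      exact Finset.sum_congr rfl fun i _ => by rw [smul_mul_assoc, mul_smul_comm]
    · rintro x y ⟨bx, hbx, rfl⟩ ⟨by', hby, rfl⟩
      exact ⟨fun i => bx i + by' i, fun i => (radSub K G).add_mem (hbx i) (hby i), by
        rw [← Finset.sum_add_distrib]; exact Finset.sum_congr rfl fun i _ => (mul_add _ _ _).symm⟩
  exact ⟨t + 1, Nat.succ_pos t, nak_aux V m vgen hvV hgen⟩

end NakSec

section KS

variable {C : Type u} [Category.{v} C] [Preadditive C] [HasFiniteBiproducts C]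

theorem local_indec (B : C) (h : IsLocalRing (CategoryTheory.End B)) : Indec B := by
  constructor
  · intro hz
    have h1 : (1 : CategoryTheory.End B) = 0 := hz.eq_of_src _ _
    exact one_ne_zero h1
  · rintro Y Z ⟨e⟩
    set p : CategoryTheory.End B := e.hom ≫ biprod.fst ≫ biprod.inl ≫ e.inv with hpdef
    have hp : p * p = p := by
      rw [CategoryTheory.End.mul_def, hpdef]
      simp
    haveI := h
    rcases IsLocalRing.isUnit_or_isUnit_of_add_one (a := p) (b := 1 - p) (by abel) with hu | hu
    · right
      have hp1 : p = 1 := hu.mul_left_cancel (by rw [hp, mul_one])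
      have hfi : (biprod.fst : Y ⊞ Z ⟶ Y) ≫ biprod.inl = 𝟙 (Y ⊞ Z) := by
        have := congrArg (fun q : CategoryTheory.End B => e.inv ≫ q ≫ e.hom) hp1
        simpa [hpdef, CategoryTheory.End.one_def] using this
      rw [IsZero.iff_id_eq_zero]
      calc 𝟙 Z = biprod.inr ≫ 𝟙 (Y ⊞ Z) ≫ biprod.snd := by simp
        _ = biprod.inr ≫ (biprod.fst ≫ biprod.inl) ≫ biprod.snd := by rw [hfi]
        _ = 0 := by simp
    · left
      have hq : (1 - p) * (1 - p) = 1 - p := by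
        rw [mul_sub, mul_one, sub_mul, one_mul, hp]; abel
      have hp0 : p = 0 := by
        have h1 : (1 : CategoryTheory.End B) - p = 1 := hu.mul_left_cancel (by rw [hq, mul_one])
        have := congrArg (fun q => (1 : CategoryTheory.End B) - q) h1
        simpa using this
      have hfi : (biprod.fst : Y ⊞ Z ⟶ Y) ≫ (biprod.inl : Y ⟶ Y ⊞ Z) = 0 := by
        have := congrArg (fun q : CategoryTheory.End B => e.inv ≫ q ≫ e.hom) hp0
        simpa [hpdef] using this
      rw [IsZero.iff_id_eq_zero]
      have hy : 𝟙 Y = (biprod.inl : Y ⟶ Y ⊞ Z) ≫ (biprod.fst ≫ (biprod.inl : Y ⟶ Y ⊞ Z)) ≫ biprod.fst := by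
        simp
      rw [hfi] at hy
      simpa using hy

end KS

section Prop12

variable {C : Type u} [Category.{v} C] [Preadditive C] [HasFiniteBiproducts C]

theorem prop_into (hKS : IsKrullSchmidt C) (hLF : LocFinite C) (A : C) :
    ∃ (G : C) (iA : A ⟶ G) (pA : G ⟶ A), iA ≫ pA = 𝟙 A ∧
      ∀ X : C, ∃ (m : ℕ) (s : Fin m → (X ⟶ G)) (t : Fin m → (G ⟶ X)),
        ∀ ψ : X ⟶ A, ψ = ∑ i, s i ≫ t i ≫ ψ := by
  obtain ⟨a, fA, hAloc, ⟨hA⟩⟩ := hKS A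
  choose nj ind hind using fun j : Fin a => ((hLF (fA j) (local_indec _ (hAloc j))).2)
  set F : (Σ j : Fin a, Fin (nj j)) → C := fun p => ind p.1 p.2 with hF
  refine ⟨A ⊞ ⨁ F, biprod.inl, biprod.fst, biprod.inl_fst, ?_⟩
  intro X
  obtain ⟨x, fX, hXloc, ⟨hX⟩⟩ := hKS X
  have key : ∀ i : Fin x, ∃ (s : fX i ⟶ A ⊞ ⨁ F) (t : (A ⊞ ⨁ F) ⟶ fX i),
      ∀ χ : fX i ⟶ A, s ≫ t ≫ χ = χ := by
    intro i
    by_cases hz : ∀ χ : fX i ⟶ A, χ = 0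
    · exact ⟨0, 0, fun χ => by rw [hz χ]; simp [hz]⟩
    · push_neg at hz
      obtain ⟨χ, hχ⟩ := hz
      have hcomp : ∃ j : Fin a, χ ≫ hA.hom ≫ biproduct.π fA j ≠ 0 := by
        by_contra hall
        push_neg at hall
        apply hχ
        have h0 : χ ≫ hA.hom = 0 := by
          apply biproduct.hom_ext
          intro j
          simpa [Category.assoc] using hall j
        calc χ = (χ ≫ hA.hom) ≫ hA.inv := by simp
          _ = 0 := by rw [h0]; simp
      obtain ⟨j, hj⟩ := hcomp
      obtain ⟨i0, ⟨e⟩⟩ := hind j (fX i) (local_indec _ (hXloc i))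
        ⟨χ ≫ hA.hom ≫ biproduct.π fA j, hj⟩
      refine ⟨e.hom ≫ biproduct.ι F ⟨j, i0⟩ ≫ biprod.inr,
        biprod.snd ≫ biproduct.π F ⟨j, i0⟩ ≫ e.inv, fun χ' => ?_⟩
      simp
  choose s0 t0 hst using key
  refine ⟨x, fun i => hX.hom ≫ biproduct.π fX i ≫ s0 i,
    fun i => t0 i ≫ biproduct.ι fX i ≫ hX.inv, ?_⟩
  intro ψ
  have hterm : ∀ i : Fin x,
      (hX.hom ≫ biproduct.π fX i ≫ s0 i) ≫ (t0 i ≫ biproduct.ι fX i ≫ hX.inv) ≫ ψ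
      = hX.hom ≫ biproduct.π fX i ≫ (biproduct.ι fX i ≫ hX.inv ≫ ψ) := by
    intro i
    have h1 := hst i (biproduct.ι fX i ≫ hX.inv ≫ ψ)
    simp only [Category.assoc] at h1 ⊢
    rw [h1]
  calc ψ = hX.hom ≫ 𝟙 (⨁ fX) ≫ hX.inv ≫ ψ := by simp
    _ = hX.hom ≫ (∑ i, biproduct.π fX i ≫ biproduct.ι fX i) ≫ hX.inv ≫ ψ := by
        rw [biproduct.total]
    _ = ∑ i, hX.hom ≫ biproduct.π fX i ≫ (biproduct.ι fX i ≫ hX.inv ≫ ψ) := by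
        rw [Preadditive.sum_comp, Preadditive.comp_sum]
        simp only [Category.assoc]
    _ = ∑ i, (hX.hom ≫ biproduct.π fX i ≫ s0 i) ≫ (t0 i ≫ biproduct.ι fX i ≫ hX.inv) ≫ ψ := by
        exact Finset.sum_congr rfl fun i _ => (hterm i).symm

theorem prop_from (hKS : IsKrullSchmidt C) (hLF : LocFinite C) (A : C) :
    ∃ (G : C) (iA : A ⟶ G) (pA : G ⟶ A), iA ≫ pA = 𝟙 A ∧
      ∀ X : C, ∃ (m : ℕ) (t : Fin m → (X ⟶ G)) (s : Fin m → (G ⟶ X)),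
        ∀ ψ : A ⟶ X, ψ = ∑ i, ψ ≫ t i ≫ s i := by
  obtain ⟨a, fA, hAloc, ⟨hA⟩⟩ := hKS A
  choose nj ind hind using fun j : Fin a => ((hLF (fA j) (local_indec _ (hAloc j))).1)
  set F : (Σ j : Fin a, Fin (nj j)) → C := fun p => ind p.1 p.2 with hF
  refine ⟨A ⊞ ⨁ F, biprod.inl, biprod.fst, biprod.inl_fst, ?_⟩
  intro X
  obtain ⟨x, fX, hXloc, ⟨hX⟩⟩ := hKS X
  have key : ∀ i : Fin x, ∃ (t : fX i ⟶ A ⊞ ⨁ F) (s : (A ⊞ ⨁ F) ⟶ fX i),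
      ∀ χ : A ⟶ fX i, χ ≫ t ≫ s = χ := by
    intro i
    by_cases hz : ∀ χ : A ⟶ fX i, χ = 0
    · exact ⟨0, 0, fun χ => by rw [hz χ]; simp [hz]⟩
    · push_neg at hz
      obtain ⟨χ, hχ⟩ := hz
      have hcomp : ∃ j : Fin a, biproduct.ι fA j ≫ hA.inv ≫ χ ≠ 0 := by
        by_contra hall
        push_neg at hall
        apply hχ
        have h0 : hA.inv ≫ χ = 0 := by
          apply biproduct.hom_ext'
          intro j
          simpa [Category.assoc] using hall j
        calc χ = hA.hom ≫ (hA.inv ≫ χ) := by simp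
          _ = 0 := by rw [h0]; simp
      obtain ⟨j, hj⟩ := hcomp
      obtain ⟨i0, ⟨e⟩⟩ := hind j (fX i) (local_indec _ (hXloc i))
        ⟨biproduct.ι fA j ≫ hA.inv ≫ χ, hj⟩
      refine ⟨e.hom ≫ biproduct.ι F ⟨j, i0⟩ ≫ biprod.inr,
        biprod.snd ≫ biproduct.π F ⟨j, i0⟩ ≫ e.inv, fun χ' => ?_⟩
      simp
  choose t0 s0 hst using key
  refine ⟨x, fun i => hX.hom ≫ biproduct.π fX i ≫ t0 i,
    fun i => s0 i ≫ biproduct.ι fX i ≫ hX.inv, ?_⟩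
  intro ψ
  have hterm : ∀ i : Fin x,
      ψ ≫ (hX.hom ≫ biproduct.π fX i ≫ t0 i) ≫ (s0 i ≫ biproduct.ι fX i ≫ hX.inv)
      = (ψ ≫ hX.hom ≫ biproduct.π fX i) ≫ (biproduct.ι fX i ≫ hX.inv) := by
    intro i
    have h2 := congrArg (fun q => q ≫ (biproduct.ι fX i ≫ hX.inv))
      (hst i (ψ ≫ hX.hom ≫ biproduct.π fX i))
    simp only [Category.assoc] at h2 ⊢
    exact h2
  calc ψ = ψ ≫ hX.hom ≫ 𝟙 (⨁ fX) ≫ hX.inv := by simp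
    _ = ψ ≫ hX.hom ≫ (∑ i, biproduct.π fX i ≫ biproduct.ι fX i) ≫ hX.inv := by
        rw [biproduct.total]
    _ = ∑ i, (ψ ≫ hX.hom ≫ biproduct.π fX i) ≫ (biproduct.ι fX i ≫ hX.inv) := by
        simp only [Preadditive.sum_comp, Preadditive.comp_sum, Category.assoc]
    _ = ∑ i, ψ ≫ (hX.hom ≫ biproduct.π fX i ≫ t0 i) ≫ (s0 i ≫ biproduct.ι fX i ≫ hX.inv) := by
        exact Finset.sum_congr rfl fun i _ => (hterm i).symm

end Prop12

theorem RadComp.one_le {C : Type u} [Category.{v} C] [Preadditive C] {n : ℕ} {A B : C}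
    {f : A ⟶ B} (h : RadComp n A B f) : 1 ≤ n := by
  cases h <;> omega

section Main

variable {K : Type w} [Field K]
variable {C : Type u} [Category.{v} C] [Preadditive C] [Linear K C] [HasFiniteBiproducts C]

theorem main_into (hKS : IsKrullSchmidt C) (homFin : ∀ X Y : C, FiniteDimensional K (X ⟶ Y))
    (hLF : LocFinite C) (A : C) :
    ∃ n : ℕ, 0 < n ∧ ∀ (X : C) (φ : X ⟶ A), RadComp n X A φ → φ = 0 := by
  obtain ⟨G, iA, pA, hip, hprop⟩ := prop_into hKS hLF A
  haveI : FiniteDimensional K (CategoryTheory.End G) := homFin G G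
  obtain ⟨t, ht0, htbot⟩ := radSub_pow_eq_bot (K := K) G
  refine ⟨t + 1, Nat.succ_pos _, ?_⟩
  have main : ∀ (n : ℕ) (X B : C) (φ : X ⟶ B), RadComp n X B φ →
      ∀ (iA : B ⟶ G) (pA : G ⟶ B), iA ≫ pA = 𝟙 B →
      (∀ X' : C, ∃ (m : ℕ) (s : Fin m → (X' ⟶ G)) (tt : Fin m → (G ⟶ X')),
        ∀ ψ : X' ⟶ B, ψ = ∑ i, s i ≫ tt i ≫ ψ) →
      ∃ (ι : Type) (_ : Fintype ι) (u : ι → (X ⟶ G)) (y : ι → CategoryTheory.End G),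
        (∀ i, IsRadMor (u i)) ∧ (∀ i, y i ∈ radSub K G ^ (n - 1)) ∧
        φ = ∑ i, u i ≫ (y i : G ⟶ G) ≫ pA := by
    intro n X B φ h
    induction h with
    | single f hf =>
      intro iA pA hip hprop
      refine ⟨Fin 1, inferInstance, fun _ => f ≫ iA, fun _ => 1,
        fun _ => hf.postcomp iA, fun _ => ?_, ?_⟩
      · rw [show (1 : ℕ) - 1 = 0 from rfl, pow_zero]
        exact Submodule.mem_one.mpr ⟨1, map_one _⟩
      · simp only [Fin.sum_univ_one, CategoryTheory.End.one_def, Category.id_comp,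
          Category.assoc, hip, Category.comp_id]
    | @comp n X' M B' f g hf hg ih =>
      intro iA pA hip hprop
      obtain ⟨ι, hfin, u, y, hu, hy, hrep⟩ := ih iA pA hip hprop
      obtain ⟨m2, s, tt, hstt⟩ := hprop M
      refine ⟨Fin m2 × ι, inferInstance, fun p => f ≫ s p.1,
        fun p => y p.2 * (show CategoryTheory.End G from tt p.1 ≫ u p.2),
        fun p => hf.postcomp _, fun p => ?_, ?_⟩
      · have hw : (show CategoryTheory.End G from tt p.1 ≫ u p.2) ∈ radSub K G :=
          (hu p.2).precomp (tt p.1)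
        have hm := Submodule.mul_mem_mul (hy p.2) hw
        rw [← pow_succ] at hm
        have hn : n - 1 + 1 = n + 1 - 1 := by have := hg.one_le; omega
        rwa [hn] at hm
      · rw [hstt g, hrep]
        simp only [Preadditive.comp_sum, Preadditive.sum_comp, Category.assoc,
          Fintype.sum_prod_type, CategoryTheory.End.mul_def]
  intro X φ h
  obtain ⟨ι, hfin, u, y, hu, hy, hrep⟩ := main (t + 1) X A φ h iA pA hip hprop
  have hy0 : ∀ i, y i = 0 := by
    intro i
    have hm := hy i
    rw [show t + 1 - 1 = t from rfl, htbot] at hm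
    simpa using hm
  rw [hrep]
  refine Finset.sum_eq_zero fun i _ => ?_
  rw [hy0 i]
  simp [show ((0 : CategoryTheory.End G) : G ⟶ G) = 0 from rfl]

theorem main_from (hKS : IsKrullSchmidt C) (homFin : ∀ X Y : C, FiniteDimensional K (X ⟶ Y))
    (hLF : LocFinite C) (A : C) :
    ∃ n : ℕ, 0 < n ∧ ∀ (X : C) (φ : A ⟶ X), RadComp n A X φ → φ = 0 := by
  obtain ⟨G, iA, pA, hip, hprop⟩ := prop_from hKS hLF A
  haveI : FiniteDimensional K (CategoryTheory.End G) := homFin G G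
  obtain ⟨t, ht0, htbot⟩ := radSub_pow_eq_bot (K := K) G
  refine ⟨t + 1, Nat.succ_pos _, ?_⟩
  have main : ∀ (n : ℕ) (M X : C) (g : M ⟶ X), RadComp n M X g →
      ∀ (c : ℕ) (p : A ⟶ M),
      (∃ (ι : Type) (_ : Fintype ι) (y : ι → CategoryTheory.End G) (v : ι → (G ⟶ M)),
        (∀ i, y i ∈ radSub K G ^ c) ∧ p = ∑ i, iA ≫ (y i : G ⟶ G) ≫ v i) →
      ∃ (ι : Type) (_ : Fintype ι) (y : ι → CategoryTheory.End G) (v : ι → (G ⟶ X)),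
        (∀ i, y i ∈ radSub K G ^ (c + n - 1)) ∧ p ≫ g = ∑ i, iA ≫ (y i : G ⟶ G) ≫ v i := by
    intro n M X g h
    induction h with
    | single f hf =>
      rintro c p ⟨ι, hfin, y, v, hy, hrep⟩
      refine ⟨ι, hfin, y, fun i => v i ≫ f, fun i => ?_, ?_⟩
      · rw [show c + 1 - 1 = c from by omega]
        exact hy i
      · rw [hrep, Preadditive.sum_comp]
        simp only [Category.assoc]
    | @comp n M' M2 X' f g hf hg ih =>
      rintro c p ⟨ι, hfin, y, v, hy, hrep⟩
      obtain ⟨m2, tt, ss, hts⟩ := hprop M2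
      have e1 : p ≫ f = ∑ i, ∑ l, iA ≫ ((y i : G ⟶ G) ≫ (v i ≫ f ≫ tt l)) ≫ ss l := by
        rw [hrep, Preadditive.sum_comp]
        refine Finset.sum_congr rfl fun i _ => ?_
        have hpsi := hts ((iA ≫ (y i : G ⟶ G) ≫ v i) ≫ f)
        rw [hpsi]
        simp only [Category.assoc]
      have hrec := ih (c + 1) (p ≫ f) ⟨ι × Fin m2, inferInstance,
        fun q => (show CategoryTheory.End G from v q.1 ≫ f ≫ tt q.2) * y q.1,
        fun q => ss q.2, ?_, ?_⟩
      · obtain ⟨κ, hκ, y', v', hy', hrep'⟩ := hrec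
        refine ⟨κ, hκ, y', v', fun i => ?_, ?_⟩
        · rw [show c + (n + 1) - 1 = c + 1 + n - 1 from by omega]
          exact hy' i
        · rw [← Category.assoc]
          exact hrep'
      · intro q
        have hw : (show CategoryTheory.End G from v q.1 ≫ f ≫ tt q.2) ∈ radSub K G :=
          (hf.postcomp (tt q.2)).precomp (v q.1)
        have hm := Submodule.mul_mem_mul hw (hy q.1)
        rw [← pow_succ'] at hm
        exact hm
      · rw [e1]
        rw [Fintype.sum_prod_type]
        simp only [CategoryTheory.End.mul_def]
  intro X φ h
  have hrep0 : 𝟙 A = ∑ _i : Fin 1, iA ≫ ((1 : CategoryTheory.End G) : G ⟶ G) ≫ pA := by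
    simp only [Fin.sum_univ_one, CategoryTheory.End.one_def, Category.id_comp]
    exact hip.symm
  obtain ⟨ι, hfin, y, v, hy, hrep⟩ := main (t + 1) A X φ h 0 (𝟙 A)
    ⟨Fin 1, inferInstance, fun _ => 1, fun _ => pA, fun _ => by
      rw [pow_zero]; exact Submodule.mem_one.mpr ⟨1, map_one _⟩, hrep0⟩
  have hy0 : ∀ i, y i = 0 := by
    intro i
    have hm := hy i
    rw [show 0 + (t + 1) - 1 = t from by omega, htbot] at hm
    simpa using hm
  rw [← Category.id_comp φ, hrep]
  refine Finset.sum_eq_zero fun i _ => ?_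
  rw [hy0 i]
  simp [show ((0 : CategoryTheory.End G) : G ⟶ G) = 0 from rfl]

end Main

theorem stmt4 (K : Type w) [Field K] (C : Type u) [Category.{v} C] [Preadditive C]
    [Linear K C] [HasFiniteBiproducts C] (hKS : IsKrullSchmidt C) (ξ : ExtCat K C)
    (homFin : ∀ X Y : C, FiniteDimensional K (X ⟶ Y))
    (extFin : ∀ X Y : C, FiniteDimensional K (ξ.Ext X Y))
    (hLF : LocFinite C) (A : C) :
    (∃ n : ℕ, 0 < n ∧ ∀ (X : C) (φ : X ⟶ A), RadComp n X A φ → φ = 0) ∧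
    (∃ m : ℕ, 0 < m ∧ ∀ (X : C) (φ : A ⟶ X), RadComp m A X φ → φ = 0) :=
  ⟨main_into hKS homFin hLF A, main_from hKS homFin hLF A⟩
end
end
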